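/- If β disjoint δ_s-cycles exist in G, then N_opt^q(δ_s, G) ≤ n − β; moreover, if there is a choice of one packet node from each of the β δ_s-cycles such that removing these β packet nodes (and all incident edges) leaves a δ_s-acyclic graph, then N_opt^q(δ_s, G) = n − β. -/

import Mathlib

open Finset Matrix

section Aux
variable {F : Type} [Field F] [DecidableEq F] {n m : ℕ} {δs β : ℕ}

/-- Upper bound: the code of length `n - β` obtained by folding each cycle's
representative into its cycle works. -/
lemma stmt9_mem
    (X : Fin m → Finset (Fin n)) (f : Fin m → Fin n)
    (Bf : Fin β → Finset (Fin n))
    (hdisj : ∀ t t', t ≠ t' → Disjoint (Bf t) (Bf t'))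
    (hcyc : ∀ t, ∀ i : Fin m, f i ∈ Bf t → 2 * δs + 1 ≤ ((X i) ∩ Bf t).card)
    (r : Fin β → Fin n) (hr : ∀ t, r t ∈ Bf t) :
    (n - β) ∈ {N : ℕ | ∃ G : Matrix (Fin n) (Fin N) F,
        ∀ z : Fin n → F,
          (∃ i : Fin m, z (f i) ≠ 0 ∧
            ((X i).filter (fun j => z j ≠ 0)).card ≤ 2 * δs) →
          Matrix.vecMul z G ≠ 0} := by
  classical
  have hrinj : Function.Injective r := by
    intro t t' h
    by_contra hne'
    exact (Finset.disjoint_left.mp (hdisj t t' hne') (hr t)) (h ▸ hr t')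
  set S : Finset (Fin n) := Finset.univ \ Finset.image r Finset.univ with hS
  have hrS : ∀ t, r t ∉ S := by
    intro t ht
    rw [hS, Finset.mem_sdiff] at ht
    exact ht.2 (Finset.mem_image_of_mem r (Finset.mem_univ t))
  have hScard : S.card = n - β := by
    rw [hS, Finset.card_sdiff_of_subset (Finset.subset_univ _), Finset.card_univ,
      Finset.card_image_of_injective _ hrinj, Finset.card_univ]
    simp
  have e : Fin (n - β) ≃ ↥S := (S.equivFin.trans (finCongr hScard)).symm
  refine ⟨fun j k => (if j = ↑(e k) then 1 else 0) +
      ∑ t, (if j = r t ∧ (↑(e k) : Fin n) ∈ Bf t then (1:F) else 0), ?_⟩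
  rintro z ⟨i, hzfi, hcard⟩ hz0
  -- key linear relations
  have hkey : ∀ s : Fin n, s ∈ S →
      z s + ∑ t, (if s ∈ Bf t then z (r t) else 0) = 0 := by
    intro s hs
    have h0 := congrFun hz0 (e.symm ⟨s, hs⟩)
    have hes : ((e (e.symm ⟨s, hs⟩)) : Fin n) = s := by
      rw [e.apply_symm_apply]
    simp only [Matrix.vecMul, Pi.zero_apply] at h0
    simp only [dotProduct, hes, mul_add, Finset.mul_sum, mul_ite, mul_one, mul_zero,
      Finset.sum_add_distrib] at h0
    rw [Finset.sum_ite_eq' Finset.univ s z, if_pos (Finset.mem_univ s),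
      Finset.sum_comm] at h0
    have hinner : ∀ y : Fin β, (∑ x, if x = r y ∧ s ∈ Bf y then z x else 0)
        = if s ∈ Bf y then z (r y) else 0 := by
      intro y
      by_cases hy : s ∈ Bf y
      · simp only [hy, and_true, Finset.sum_ite_eq' Finset.univ (r y) z,
          if_pos (Finset.mem_univ _), if_true]
      · simp [hy]
    rw [Finset.sum_congr rfl (fun y _ => hinner y)] at h0
    exact h0
  -- find a cycle t with f i ∈ Bf t and z (r t) ≠ 0
  obtain ⟨t, hfit, hzrt⟩ : ∃ t, f i ∈ Bf t ∧ z (r t) ≠ 0 := by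
    by_cases hfiS : f i ∈ S
    · have := hkey (f i) hfiS
      have hsum : ∑ t, (if f i ∈ Bf t then z (r t) else 0) ≠ 0 := by
        intro h; rw [h, add_zero] at this; exact hzfi this
      obtain ⟨t, _, ht⟩ := Finset.exists_ne_zero_of_sum_ne_zero hsum
      by_cases h1 : f i ∈ Bf t
      · exact ⟨t, h1, by simpa [h1] using ht⟩
      · simp [h1] at ht
    · rw [hS, Finset.mem_sdiff, not_and_or] at hfiS
      have : f i ∈ Finset.image r Finset.univ := by
        rcases hfiS with h | h
        · exact absurd (Finset.mem_univ _) h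
        · simpa using h
      obtain ⟨t, _, ht⟩ := Finset.mem_image.mp this
      exact ⟨t, ht ▸ hr t, ht ▸ hzfi⟩
  -- every element of Bf t is in the support of z
  have hsupp : ∀ b ∈ Bf t, z b ≠ 0 := by
    intro b hb
    by_cases hbrt : b = r t
    · rwa [hbrt]
    · have hbS : b ∈ S := by
        rw [hS, Finset.mem_sdiff]
        refine ⟨Finset.mem_univ _, ?_⟩
        intro hbim
        obtain ⟨t', _, ht'⟩ := Finset.mem_image.mp hbim
        rcases eq_or_ne t' t with h | h
        · exact hbrt (h ▸ ht').symm
        · exact Finset.disjoint_left.mp (hdisj t' t h) (ht' ▸ hr t') (ht' ▸ hb)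
          -- careful: need r t' ∈ Bf t' and b = r t', b ∈ Bf t
      have hk := hkey b hbS
      have : ∑ t', (if b ∈ Bf t' then z (r t') else 0) = z (r t) := by
        rw [Finset.sum_eq_single t]
        · rw [if_pos hb]
        · intro t' _ ht'
          rw [if_neg (fun hbt' => Finset.disjoint_left.mp (hdisj t' t ht') hbt' hb)]
        · intro h; exact absurd (Finset.mem_univ t) h
      rw [this] at hk
      intro hzb
      rw [hzb, zero_add] at hk
      exact hzrt hk
  -- cardinality contradiction
  have h1 : (X i ∩ Bf t) ⊆ (X i).filter (fun j => z j ≠ 0) := by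
    intro b hb
    rw [Finset.mem_inter] at hb
    exact Finset.mem_filter.mpr ⟨hb.1, hsupp b hb.2⟩
  have := (hcyc t i hfit).trans (Finset.card_le_card h1)
  omega

/-- Lower bound under acyclicity after removing the representatives. -/
lemma stmt9_lb
    (X : Fin m → Finset (Fin n)) (f : Fin m → Fin n)
    (Bf : Fin β → Finset (Fin n))
    (hdisj : ∀ t t', t ≠ t' → Disjoint (Bf t) (Bf t'))
    (r : Fin β → Fin n) (hr : ∀ t, r t ∈ Bf t)
    (hacyc : ∀ B' : Finset (Fin n), (∀ t, r t ∉ B') → B'.Nonempty →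
        ∃ i : Fin m, f i ∈ B' ∧ ((X i) ∩ B').card < 2 * δs + 1) :
    ∀ N ∈ {N : ℕ | ∃ G : Matrix (Fin n) (Fin N) F,
        ∀ z : Fin n → F,
          (∃ i : Fin m, z (f i) ≠ 0 ∧
            ((X i).filter (fun j => z j ≠ 0)).card ≤ 2 * δs) →
          Matrix.vecMul z G ≠ 0}, n - β ≤ N := by
  classical
  rintro N ⟨G, hG⟩
  by_contra hlt
  push_neg at hlt
  have hrinj : Function.Injective r := by
    intro t t' h
    by_contra hne'
    exact (Finset.disjoint_left.mp (hdisj t t' hne') (hr t)) (h ▸ hr t')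
  set S : Finset (Fin n) := Finset.univ \ Finset.image r Finset.univ with hS
  have hScard : S.card = n - β := by
    rw [hS, Finset.card_sdiff_of_subset (Finset.subset_univ _), Finset.card_univ,
      Finset.card_image_of_injective _ hrinj, Finset.card_univ]
    simp
  -- inclusion linear map
  let E : (↥S → F) →ₗ[F] (Fin n → F) :=
    { toFun := fun v j => if h : j ∈ S then v ⟨j, h⟩ else 0
      map_add' := by intro v w; funext j; by_cases h : j ∈ S <;> simp [h]
      map_smul' := by intro c v; funext j; by_cases h : j ∈ S <;> simp [h] }
  have hEinj : Function.Injective E := by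
    intro v w h
    funext s
    have := congrFun h (s : Fin n)
    simpa [E, dif_pos s.2] using this
  let φ : (↥S → F) →ₗ[F] (Fin N → F) := (Matrix.vecMulLinear G).comp E
  have hφ : ¬ Function.Injective φ := by
    intro h
    have := LinearMap.finrank_le_finrank_of_injective h
    rw [Module.finrank_fintype_fun_eq_card, Module.finrank_fintype_fun_eq_card,
      Fintype.card_coe, hScard, Fintype.card_fin] at this
    omega
  obtain ⟨x, y, hxy, hne'⟩ := Function.not_injective_iff.mp hφ
  set z : Fin n → F := E (x - y) with hz
  have hz0 : Matrix.vecMul z G = 0 := by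
    have : φ (x - y) = 0 := by rw [map_sub, hxy, sub_self]
    simpa [φ, Matrix.vecMulLinear_apply, hz, Matrix.sub_vecMul] using this
  have hzne : z ≠ 0 := by
    intro h
    apply hne'
    have hxy0 : x - y = 0 := by
      apply hEinj
      rw [map_zero, ← hz]
      exact h
    exact sub_eq_zero.mp hxy0
  have hzr : ∀ t, z (r t) = 0 := by
    intro t
    have hrS : r t ∉ S := by
      intro ht
      rw [hS, Finset.mem_sdiff] at ht
      exact ht.2 (Finset.mem_image_of_mem r (Finset.mem_univ t))
    simp [hz, E, dif_neg hrS]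
  set B' : Finset (Fin n) := Finset.univ.filter (fun j => z j ≠ 0) with hB'
  have hB'ne : B'.Nonempty := by
    obtain ⟨j, hj⟩ := Function.ne_iff.mp hzne
    exact ⟨j, Finset.mem_filter.mpr ⟨Finset.mem_univ _, hj⟩⟩
  have hB'r : ∀ t, r t ∉ B' := by
    intro t ht
    exact (Finset.mem_filter.mp ht).2 (hzr t)
  obtain ⟨i, hfi, hci⟩ := hacyc B' hB'r hB'ne
  apply hG z ?_ hz0
  refine ⟨i, (Finset.mem_filter.mp hfi).2, ?_⟩
  have heq : (X i).filter (fun j => z j ≠ 0) = X i ∩ B' := by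
    ext j
    simp [hB', Finset.mem_filter, Finset.mem_inter, and_assoc]
  rw [heq]
  omega

end Aux

theorem stmt9 {F : Type} [Field F] [DecidableEq F]
    {n m : ℕ} (δs β : ℕ)
    (X : Fin m → Finset (Fin n)) (f : Fin m → Fin n)
    (hf : ∀ i, f i ∉ X i)
    (Bf : Fin β → Finset (Fin n))
    (hne : ∀ t, (Bf t).Nonempty)
    (hdisj : ∀ t t', t ≠ t' → Disjoint (Bf t) (Bf t'))
    (hcyc : ∀ t, ∀ i : Fin m, f i ∈ Bf t → 2 * δs + 1 ≤ ((X i) ∩ Bf t).card) :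
    sInf {N : ℕ | ∃ G : Matrix (Fin n) (Fin N) F,
        ∀ z : Fin n → F,
          (∃ i : Fin m, z (f i) ≠ 0 ∧
            ((X i).filter (fun j => z j ≠ 0)).card ≤ 2 * δs) →
          Matrix.vecMul z G ≠ 0} ≤ n - β ∧
    (∀ r : Fin β → Fin n, (∀ t, r t ∈ Bf t) →
      (∀ B' : Finset (Fin n), (∀ t, r t ∉ B') → B'.Nonempty →
        ∃ i : Fin m, f i ∈ B' ∧ ((X i) ∩ B').card < 2 * δs + 1) →
      sInf {N : ℕ | ∃ G : Matrix (Fin n) (Fin N) F,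
        ∀ z : Fin n → F,
          (∃ i : Fin m, z (f i) ≠ 0 ∧
            ((X i).filter (fun j => z j ≠ 0)).card ≤ 2 * δs) →
          Matrix.vecMul z G ≠ 0} = n - β) := by
  classical
  have hmem := stmt9_mem (F := F) X f Bf hdisj hcyc
    (fun t => (hne t).choose) (fun t => (hne t).choose_spec)
  constructor
  · exact Nat.sInf_le hmem
  · intro r hrB hacyc
    have hmem' := stmt9_mem (F := F) X f Bf hdisj hcyc r hrB
    exact le_antisymm (Nat.sInf_le hmem')
      (le_csInf ⟨_, hmem'⟩ (stmt9_lb X f Bf hdisj r hrB hacyc))
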